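/- Let α > 1 and let ζ = (ζ_ℝ, ζ_ℂ) ∈ ℝ × ℂ = ℝ³ with Euclidean norm |ζ|. Then the improper integral ∫₀^∞ dx/|ζ − (x^α,0,0)| is at most (α·2^{1/α}/(α−1)) · |ζ|^{1/α}/|ζ_ℂ|, whenever ζ_ℂ ≠ 0. -/

import Mathlib

open MeasureTheory Set

noncomputable section

abbrev E3 := WithLp 2 (ℝ × ℂ)

/-- The point `(x^α, 0, 0)` on the nonnegative axis of `ℝ³ = ℝ ⊕ ℂ`. -/
def axPt (α x : ℝ) : E3 := (WithLp.equiv 2 (ℝ × ℂ)).symm (x ^ α, 0)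

/-- The `ℂ`-component of `ζ ∈ ℝ³ = ℝ ⊕ ℂ`. -/
def zC (ζ : E3) : ℂ := ((WithLp.equiv 2 (ℝ × ℂ)) ζ).2

lemma comp_le_norm (p : E3) : ‖p.fst‖ ≤ ‖p‖ ∧ ‖p.snd‖ ≤ ‖p‖ := by
  have h := WithLp.prod_norm_sq_eq_of_L2 p
  have h1 : (0:ℝ) ≤ ‖p‖ := norm_nonneg _
  constructor <;>
    nlinarith [norm_nonneg p.fst, norm_nonneg p.snd, sq_nonneg ‖p.fst‖, sq_nonneg ‖p.snd‖]

theorem stmt0 (α : ℝ) (hα : 1 < α) (ζ : E3) (hz : zC ζ ≠ 0) :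
    ∫⁻ x in Ioi (0 : ℝ), ENNReal.ofReal (1 / ‖ζ - axPt α x‖) ≤
      ENNReal.ofReal (α * (2 : ℝ) ^ (1 / α) / (α - 1) * ‖ζ‖ ^ (1 / α) / ‖zC ζ‖) := by
  have hα0 : (0:ℝ) < α := by linarith
  set r := ‖ζ‖ with hrdef
  set c := ‖zC ζ‖ with hcdef
  have hc : 0 < c := norm_pos_iff.mpr hz
  have hsnd : zC ζ = ζ.snd := rfl
  have hcr : c ≤ r := by rw [hcdef, hsnd]; exact (comp_le_norm ζ).2
  have hr0 : 0 < r := lt_of_lt_of_le hc hcr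
  have h2r : (0:ℝ) < 2 * r := by linarith
  set x₀ := (2 * r) ^ (1/α) with hx₀def
  have hx₀ : 0 < x₀ := Real.rpow_pos_of_pos h2r _
  have hx₀α : x₀ ^ α = 2 * r := by
    rw [hx₀def, ← Real.rpow_mul h2r.le, one_div, inv_mul_cancel₀ hα0.ne', Real.rpow_one]
  -- component facts
  have hdiff_snd : ∀ x : ℝ, (ζ - axPt α x).snd = zC ζ := by
    intro x
    rw [WithLp.sub_snd, hsnd, axPt, WithLp.equiv_symm_apply, WithLp.toLp_snd (p := 2) (x ^ α, (0:ℂ)), sub_zero]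
  have hdiff_fst : ∀ x : ℝ, (ζ - axPt α x).fst = ζ.fst - x ^ α := by
    intro x
    rw [WithLp.sub_fst, axPt, WithLp.equiv_symm_apply, WithLp.toLp_fst (p := 2) (x ^ α, (0:ℂ))]
  have hnorm_ge_c : ∀ x : ℝ, c ≤ ‖ζ - axPt α x‖ := by
    intro x
    calc c = ‖(ζ - axPt α x).snd‖ := by rw [hdiff_snd]
    _ ≤ _ := (comp_le_norm _).2
  -- bound on Ioi x₀
  have key2 : ∀ x ∈ Ioi x₀, ENNReal.ofReal (1 / ‖ζ - axPt α x‖) ≤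
      ENNReal.ofReal (2 * x ^ (-α)) := by
    intro x hx
    have hxx : x₀ ≤ x := le_of_lt hx
    have hxpos : 0 < x := lt_of_lt_of_le hx₀ hxx
    have hxα : 2 * r ≤ x ^ α := by
      rw [← hx₀α]; exact Real.rpow_le_rpow hx₀.le hxx hα0.le
    have hfst : |ζ.fst| ≤ r := (comp_le_norm ζ).1
    have hge : x ^ α / 2 ≤ ‖ζ - axPt α x‖ := by
      have : x ^ α / 2 ≤ ‖(ζ - axPt α x).fst‖ := by
        rw [hdiff_fst, Real.norm_eq_abs, abs_sub_comm]
        have h1 : ζ.fst ≤ r := le_trans (le_abs_self _) hfst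
        calc x ^ α / 2 ≤ x ^ α - ζ.fst := by linarith
        _ ≤ |x ^ α - ζ.fst| := le_abs_self _
      exact le_trans this (comp_le_norm _).1
    apply ENNReal.ofReal_le_ofReal
    have h2 : (0:ℝ) < x ^ α / 2 := by positivity
    calc 1 / ‖ζ - axPt α x‖ ≤ 1 / (x ^ α / 2) := one_div_le_one_div_of_le h2 hge
    _ = 2 * x ^ (-α) := by
        rw [Real.rpow_neg hxpos.le]
        field_simp
  -- split
  rw [← Ioc_union_Ioi_eq_Ioi hx₀.le,
    lintegral_union measurableSet_Ioi Ioc_disjoint_Ioi_same]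
  have I1 : ∫⁻ x in Ioc 0 x₀, ENNReal.ofReal (1 / ‖ζ - axPt α x‖) ≤
      ENNReal.ofReal (x₀ / c) := by
    calc ∫⁻ x in Ioc 0 x₀, ENNReal.ofReal (1 / ‖ζ - axPt α x‖)
        ≤ ∫⁻ _ in Ioc 0 x₀, ENNReal.ofReal (1 / c) := by
          apply setLIntegral_mono' measurableSet_Ioc
          intro x _
          exact ENNReal.ofReal_le_ofReal (one_div_le_one_div_of_le hc (hnorm_ge_c x))
    _ = ENNReal.ofReal (1 / c) * volume (Ioc 0 x₀) := setLIntegral_const _ _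
    _ = ENNReal.ofReal (x₀ / c) := by
        rw [Real.volume_Ioc, sub_zero, ← ENNReal.ofReal_mul (by positivity)]
        congr 1
        field_simp
  have hint : IntegrableOn (fun x : ℝ => 2 * x ^ (-α)) (Ioi x₀) := by
    exact (integrableOn_Ioi_rpow_of_lt (by linarith) hx₀).const_mul 2
  have I2 : ∫⁻ x in Ioi x₀, ENNReal.ofReal (1 / ‖ζ - axPt α x‖) ≤
      ENNReal.ofReal (2 * x₀ ^ (1 - α) / (α - 1)) := by
    calc ∫⁻ x in Ioi x₀, ENNReal.ofReal (1 / ‖ζ - axPt α x‖)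
        ≤ ∫⁻ x in Ioi x₀, ENNReal.ofReal (2 * x ^ (-α)) :=
          setLIntegral_mono' measurableSet_Ioi key2
    _ = ENNReal.ofReal (∫ x in Ioi x₀, 2 * x ^ (-α)) := by
        rw [← ofReal_integral_eq_lintegral_ofReal hint]
        filter_upwards [ae_restrict_mem measurableSet_Ioi] with x hx
        have hxpos : 0 < x := lt_trans hx₀ hx
        positivity
    _ = ENNReal.ofReal (2 * x₀ ^ (1 - α) / (α - 1)) := by
        congr 1
        rw [integral_const_mul,
          integral_Ioi_rpow_of_lt (by linarith) hx₀]
        rw [show -α + 1 = 1 - α by ring]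
        have h5 : (1:ℝ) - α ≠ 0 := by linarith
        have h6 : α - 1 ≠ 0 := by linarith
        field_simp [h5, h6]
        ring
  calc _ ≤ ENNReal.ofReal (x₀ / c) + ENNReal.ofReal (2 * x₀ ^ (1 - α) / (α - 1)) :=
        add_le_add I1 I2
  _ = ENNReal.ofReal (x₀ / c + 2 * x₀ ^ (1 - α) / (α - 1)) := by
      rw [← ENNReal.ofReal_add (by positivity) (div_nonneg (by positivity) (by linarith))]
  _ ≤ _ := by
      apply ENNReal.ofReal_le_ofReal
      have hx1 : x₀ ^ (1 - α) = x₀ / (2 * r) := by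
        rw [Real.rpow_sub hx₀, Real.rpow_one, hx₀α]
      have hx0eq : x₀ = 2 ^ (1/α) * r ^ (1/α) := Real.mul_rpow (by norm_num) hr0.le
      rw [hx1]
      have h4 : α - 1 ≠ 0 := by linarith
      have h1 : 2 * (x₀ / (2 * r)) / (α - 1) ≤ x₀ / ((α - 1) * c) := by
        have he : 2 * (x₀ / (2 * r)) / (α - 1) = x₀ / ((α - 1) * r) := by
          field_simp
        rw [he]
        apply div_le_div_of_nonneg_left hx₀.le (mul_pos (by linarith) hc)
        exact mul_le_mul_of_nonneg_left hcr (by linarith)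
      have h2 : x₀ / c + x₀ / ((α - 1) * c) = α * 2 ^ (1/α) / (α - 1) * r ^ (1/α) / c := by
        rw [hx0eq]
        field_simp [hc.ne', h4]
        ring
      linarith
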